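/- For the star graph S_{n+1} = K_{1,n} with n ≥ 2, the Smith normal form over ℤ of the transmission-adjacency matrix A^trs(S_{n+1}) = diag(trs) − A is diag(1, 1, 2n−1, …, 2n−1, 2n(n−1)(2n−1)), i.e., invariant factors 1, 1, then (n−2) copies of 2n−1, then 2n(n−1)(2n−1). -/
import Mathlib


open Matrix

namespace Star15



/-- Entry function of the left unimodular matrix `U`. -/
def uuE (n i k : ℕ) : ℤ :=
  if i = 0 then (if k = 1 then -1 else 0)
  else if i = 1 then (if k = 0 then -1 else if k = 1 then -(n : ℤ) else 0)
  else if i = n then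
    (if k = 0 then 2 * (n : ℤ) - 1 else if k = 1 then 2 * (n : ℤ) ^ 2 - 2 * n + 1 else 1)
  else if k = 1 then -1 else if k = i + 1 then 1 else 0

/-- Entry function of the transmission-adjacency matrix of the star. -/
def mmE (n k l : ℕ) : ℤ :=
  if k = l then (if k = 0 then (n : ℤ) else 2 * (n : ℤ) - 1)
  else if k = 0 ∨ l = 0 then -1 else 0

/-- Entry function of the right unimodular matrix `W`. -/
def wwE (n l j : ℕ) : ℤ :=
  if l = 0 then (if j = 0 then 1 else if j = n then 2 * (n : ℤ) - 1 else 0)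
  else if l = 1 then (if j = n then 1 else 0)
  else if l = 2 then
    (if j = 0 then 0 else if j = 1 then 1
     else if j = n then 2 * (n : ℤ) ^ 2 - 2 * n + 1 else -1)
  else if j = l - 1 then 1 else if j = n then 1 else 0

/-- Entry function of the inverse of `U`. -/
def vvE (n k j : ℕ) : ℤ :=
  if k = 0 then (if j = 0 then (n : ℤ) else if j = 1 then -1 else 0)
  else if k = 1 then (if j = 0 then -1 else 0)
  else if k = 2 then
    (if j = 0 then -1 else if j = 1 then 2 * (n : ℤ) - 1 else if j = n then 1 else -1)
  else if j = 0 then -1 else if j = k - 1 then 1 else 0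

/-- Entry function of the inverse of `W`. -/
def zzE (n l j : ℕ) : ℤ :=
  if l = 0 then (if j = 0 then 1 else if j = 1 then -(2 * (n : ℤ) - 1) else 0)
  else if l = 1 then (if j = 0 then 0 else if j = 1 then -(2 * (n : ℤ) ^ 2 - n - 1) else 1)
  else if l = n then (if j = 1 then 1 else 0)
  else if j = 1 then -1 else if j = l + 1 then 1 else 0

/-- Entry function of the diagonal (Smith normal form). -/
def ddE (n i : ℕ) : ℤ :=
  if i ≤ 1 then (1 : ℤ)
  else if i = n then 2 * (n : ℤ) * ((n : ℤ) - 1) * (2 * (n : ℤ) - 1)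
  else 2 * (n : ℤ) - 1

lemma sum_eval {m a b : ℕ} {A B E : ℤ} (f : ℕ → ℤ) (ha : a < m) (hb : b < m) (hab : a ≠ b)
    (h : ∀ k, k < m → f k = if k = a then A else if k = b then B else E) :
    ∑ k ∈ Finset.range m, f k = A + B + ((m : ℤ) - 2) * E := by
  have h1 : ∀ k ∈ Finset.range m,
      f k = (if k = a then A - E else 0) + ((if k = b then B - E else 0) + E) := by
    intro k hk
    rw [h k (Finset.mem_range.mp hk)]
    by_cases h1 : k = a
    · subst h1; rw [if_pos rfl, if_pos rfl, if_neg hab]; ring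
    · rw [if_neg h1, if_neg h1]
      by_cases h2 : k = b
      · subst h2; rw [if_pos rfl, if_pos rfl]; ring
      · rw [if_neg h2, if_neg h2]; ring
  rw [Finset.sum_congr rfl h1, Finset.sum_add_distrib, Finset.sum_add_distrib,
    Finset.sum_ite_eq' _ a (fun _ => A - E), Finset.sum_ite_eq' _ b (fun _ => B - E),
    if_pos (Finset.mem_range.mpr ha), if_pos (Finset.mem_range.mpr hb),
    Finset.sum_const, Finset.card_range, nsmul_eq_mul]
  push_cast
  ring

lemma sum_eval3 {m a b c : ℕ} {A B C E : ℤ} (f : ℕ → ℤ)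
    (ha : a < m) (hb : b < m) (hc : c < m) (hab : a ≠ b) (hac : a ≠ c) (hbc : b ≠ c)
    (h : ∀ k, k < m → f k = if k = a then A else if k = b then B else if k = c then C else E) :
    ∑ k ∈ Finset.range m, f k = A + B + C + ((m : ℤ) - 3) * E := by
  have h1 : ∀ k ∈ Finset.range m,
      f k = (if k = a then A - E else 0) +
        ((if k = b then B - E else 0) + ((if k = c then C - E else 0) + E)) := by
    intro k hk
    rw [h k (Finset.mem_range.mp hk)]
    by_cases h1 : k = a
    · subst h1; rw [if_pos rfl, if_pos rfl, if_neg hab, if_neg hac]; ring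
    · rw [if_neg h1, if_neg h1]
      by_cases h2 : k = b
      · subst h2; rw [if_pos rfl, if_pos rfl, if_neg hbc]; ring
      · rw [if_neg h2, if_neg h2]
        by_cases h3 : k = c
        · subst h3; rw [if_pos rfl, if_pos rfl]; ring
        · rw [if_neg h3, if_neg h3]; ring
  rw [Finset.sum_congr rfl h1, Finset.sum_add_distrib, Finset.sum_add_distrib,
    Finset.sum_add_distrib,
    Finset.sum_ite_eq' _ a (fun _ => A - E), Finset.sum_ite_eq' _ b (fun _ => B - E),
    Finset.sum_ite_eq' _ c (fun _ => C - E),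
    if_pos (Finset.mem_range.mpr ha), if_pos (Finset.mem_range.mpr hb),
    if_pos (Finset.mem_range.mpr hc),
    Finset.sum_const, Finset.card_range, nsmul_eq_mul]
  push_cast
  ring




set_option maxHeartbeats 1000000 in
lemma L1 {n : ℕ} (hn : 2 ≤ n) {i j : ℕ} (hi : i < n + 1) (hj : j < n + 1) :
    ∑ k ∈ Finset.range (n + 1), uuE n i k * mmE n k j = ddE n i * zzE n i j := by
  by_cases hi0 : i = 0
  · subst hi0
    rw [sum_eval (a := 1) (b := 0) (A := -(mmE n 1 j)) (B := 0) (E := 0) _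
      (by omega) (by omega) (by omega) ?_]
    · simp only [mmE, ddE, zzE]
      split_ifs <;>
              (try simp only [false_or, or_false, true_or, or_true, not_true, not_false_iff] at *) <;>
              first | rfl | ring1 | omega | (push_cast; ring1) | exact (‹False›).elim
    · intro k hk
      simp only [uuE, mmE]
      split_ifs <;>
              (try simp only [false_or, or_false, true_or, or_true, not_true, not_false_iff] at *) <;>
              first | rfl | ring1 | omega | (push_cast; ring1) | exact (‹False›).elim
  · by_cases hi1 : i = 1
    · subst hi1
      rw [sum_eval (a := 0) (b := 1) (A := -(mmE n 0 j)) (B := -(n : ℤ) * mmE n 1 j)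
        (E := 0) _ (by omega) (by omega) (by omega) ?_]
      · simp only [mmE, ddE, zzE]
        split_ifs <;>
              (try simp only [false_or, or_false, true_or, or_true, not_true, not_false_iff] at *) <;>
              first | rfl | ring1 | omega | (push_cast; ring1) | exact (‹False›).elim
      · intro k hk
        simp only [uuE, mmE]
        split_ifs <;>
              (try simp only [false_or, or_false, true_or, or_true, not_true, not_false_iff] at *) <;>
              first | rfl | ring1 | omega | (push_cast; ring1) | exact (‹False›).elim
    · by_cases hin : i = n
      · by_cases hj0 : j = 0
        · rw [sum_eval3 (a := 0) (b := 1) (c := 2)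
            (A := (2 * (n : ℤ) - 1) * n) (B := -(2 * (n : ℤ) ^ 2 - 2 * n + 1))
            (C := -1) (E := -1) _
            (by omega) (by omega) (by omega) (by omega) (by omega) (by omega) ?_]
          · simp only [ddE, zzE]
            split_ifs <;>
              (try simp only [false_or, or_false, true_or, or_true, not_true, not_false_iff] at *) <;>
              first | rfl | ring1 | omega | (push_cast; ring1) | exact (‹False›).elim
          · intro k hk
            simp only [uuE, mmE]
            split_ifs <;>
              (try simp only [false_or, or_false, true_or, or_true, not_true, not_false_iff] at *) <;>
              first | rfl | ring1 | omega | (push_cast; ring1) | exact (‹False›).elim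
        · by_cases hj1 : j = 1
          · rw [sum_eval3 (a := 0) (b := 1) (c := 2)
              (A := -(2 * (n : ℤ) - 1))
              (B := (2 * (n : ℤ) ^ 2 - 2 * n + 1) * (2 * (n : ℤ) - 1))
              (C := 0) (E := 0) _
              (by omega) (by omega) (by omega) (by omega) (by omega) (by omega) ?_]
            · simp only [ddE, zzE]
              split_ifs <;>
              (try simp only [false_or, or_false, true_or, or_true, not_true, not_false_iff] at *) <;>
              first | rfl | ring1 | omega | (push_cast; ring1) | exact (‹False›).elim
            · intro k hk
              simp only [uuE, mmE]
              split_ifs <;>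
              (try simp only [false_or, or_false, true_or, or_true, not_true, not_false_iff] at *) <;>
              first | rfl | ring1 | omega | (push_cast; ring1) | exact (‹False›).elim
          · rw [sum_eval3 (a := 0) (b := 1) (c := j)
              (A := -(2 * (n : ℤ) - 1)) (B := 0) (C := 2 * (n : ℤ) - 1) (E := 0) _
              (by omega) (by omega) (by omega) (by omega) (by omega) (by omega) ?_]
            · simp only [ddE, zzE]
              split_ifs <;>
              (try simp only [false_or, or_false, true_or, or_true, not_true, not_false_iff] at *) <;>
              first | rfl | ring1 | omega | (push_cast; ring1) | exact (‹False›).elim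
            · intro k hk
              simp only [uuE, mmE]
              split_ifs <;>
              (try simp only [false_or, or_false, true_or, or_true, not_true, not_false_iff] at *) <;>
              first | rfl | ring1 | omega | (push_cast; ring1) | exact (‹False›).elim
      · rw [sum_eval (a := i + 1) (b := 1) (A := mmE n (i + 1) j) (B := -(mmE n 1 j))
          (E := 0) _ (by omega) (by omega) (by omega) ?_]
        · simp only [mmE, ddE, zzE]
          split_ifs <;>
              (try simp only [false_or, or_false, true_or, or_true, not_true, not_false_iff] at *) <;>
              first | rfl | ring1 | omega | (push_cast; ring1) | exact (‹False›).elim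
        · intro k hk
          simp only [uuE, mmE]
          split_ifs <;>
              (try simp only [false_or, or_false, true_or, or_true, not_true, not_false_iff] at *) <;>
              first | rfl | ring1 | omega | (push_cast; ring1) | exact (‹False›).elim


set_option maxHeartbeats 1000000 in
lemma L3 {n : ℕ} (hn : 2 ≤ n) {i j : ℕ} (hi : i < n + 1) (hj : j < n + 1) :
    ∑ k ∈ Finset.range (n + 1), uuE n i k * vvE n k j = if i = j then 1 else 0 := by
  by_cases hi0 : i = 0
  · subst hi0
    rw [sum_eval (a := 1) (b := 0) (A := -(vvE n 1 j)) (B := 0) (E := 0) _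
      (by omega) (by omega) (by omega) ?_]
    · simp only [vvE]
      split_ifs <;>
              (try simp only [false_or, or_false, true_or, or_true, not_true, not_false_iff] at *) <;>
              first | rfl | ring1 | omega | (push_cast; ring1) | exact (‹False›).elim
    · intro k hk
      simp only [uuE, vvE]
      split_ifs <;>
              (try simp only [false_or, or_false, true_or, or_true, not_true, not_false_iff] at *) <;>
              first | rfl | ring1 | omega | (push_cast; ring1) | exact (‹False›).elim
  · by_cases hi1 : i = 1
    · subst hi1
      rw [sum_eval (a := 0) (b := 1) (A := -(vvE n 0 j)) (B := -(n : ℤ) * vvE n 1 j)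
        (E := 0) _ (by omega) (by omega) (by omega) ?_]
      · simp only [vvE]
        split_ifs <;>
              (try simp only [false_or, or_false, true_or, or_true, not_true, not_false_iff] at *) <;>
              first | rfl | ring1 | omega | (push_cast; ring1) | exact (‹False›).elim
      · intro k hk
        simp only [uuE, vvE]
        split_ifs <;>
              (try simp only [false_or, or_false, true_or, or_true, not_true, not_false_iff] at *) <;>
              first | rfl | ring1 | omega | (push_cast; ring1) | exact (‹False›).elim
    · by_cases hin : i = n
      · by_cases hj0 : j = 0
        · rw [sum_eval3 (a := 0) (b := 1) (c := 2)
            (A := (2 * (n : ℤ) - 1) * n) (B := -(2 * (n : ℤ) ^ 2 - 2 * n + 1))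
            (C := -1) (E := -1) _
            (by omega) (by omega) (by omega) (by omega) (by omega) (by omega) ?_]
          · split_ifs <;>
              (try simp only [false_or, or_false, true_or, or_true, not_true, not_false_iff] at *) <;>
              first | rfl | ring1 | omega | (push_cast; ring1) | exact (‹False›).elim
          · intro k hk
            simp only [uuE, vvE]
            split_ifs <;>
              (try simp only [false_or, or_false, true_or, or_true, not_true, not_false_iff] at *) <;>
              first | rfl | ring1 | omega | (push_cast; ring1) | exact (‹False›).elim
        · by_cases hj1 : j = 1
          · rw [sum_eval (a := 0) (b := 2) (A := -(2 * (n : ℤ) - 1))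
              (B := 2 * (n : ℤ) - 1) (E := 0) _ (by omega) (by omega) (by omega) ?_]
            · split_ifs <;>
              (try simp only [false_or, or_false, true_or, or_true, not_true, not_false_iff] at *) <;>
              first | rfl | ring1 | omega | (push_cast; ring1) | exact (‹False›).elim
            · intro k hk
              simp only [uuE, vvE]
              split_ifs <;>
              (try simp only [false_or, or_false, true_or, or_true, not_true, not_false_iff] at *) <;>
              first | rfl | ring1 | omega | (push_cast; ring1) | exact (‹False›).elim
          · by_cases hjn : j = n
            · rw [sum_eval (a := 2) (b := 0) (A := 1) (B := 0) (E := 0) _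
                (by omega) (by omega) (by omega) ?_]
              · split_ifs <;>
              (try simp only [false_or, or_false, true_or, or_true, not_true, not_false_iff] at *) <;>
              first | rfl | ring1 | omega | (push_cast; ring1) | exact (‹False›).elim
              · intro k hk
                simp only [uuE, vvE]
                split_ifs <;>
              (try simp only [false_or, or_false, true_or, or_true, not_true, not_false_iff] at *) <;>
              first | rfl | ring1 | omega | (push_cast; ring1) | exact (‹False›).elim
            · rw [sum_eval (a := 2) (b := j + 1) (A := -1) (B := 1) (E := 0) _
                (by omega) (by omega) (by omega) ?_]
              · split_ifs <;>
              (try simp only [false_or, or_false, true_or, or_true, not_true, not_false_iff] at *) <;>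
              first | rfl | ring1 | omega | (push_cast; ring1) | exact (‹False›).elim
              · intro k hk
                simp only [uuE, vvE]
                split_ifs <;>
              (try simp only [false_or, or_false, true_or, or_true, not_true, not_false_iff] at *) <;>
              first | rfl | ring1 | omega | (push_cast; ring1) | exact (‹False›).elim
      · rw [sum_eval (a := i + 1) (b := 1) (A := vvE n (i + 1) j) (B := -(vvE n 1 j))
          (E := 0) _ (by omega) (by omega) (by omega) ?_]
        · simp only [vvE]
          split_ifs <;>
              (try simp only [false_or, or_false, true_or, or_true, not_true, not_false_iff] at *) <;>
              first | rfl | ring1 | omega | (push_cast; ring1) | exact (‹False›).elim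
        · intro k hk
          simp only [uuE, vvE]
          split_ifs <;>
              (try simp only [false_or, or_false, true_or, or_true, not_true, not_false_iff] at *) <;>
              first | rfl | ring1 | omega | (push_cast; ring1) | exact (‹False›).elim

set_option maxHeartbeats 1000000 in
lemma Lz {n : ℕ} (hn : 2 ≤ n) {i j : ℕ} (hi : i < n + 1) (hj : j < n + 1) :
    ∑ l ∈ Finset.range (n + 1), zzE n i l * wwE n l j = if i = j then 1 else 0 := by
  by_cases hi0 : i = 0
  · subst hi0
    rw [sum_eval (a := 0) (b := 1) (A := wwE n 0 j) (B := -(2 * (n : ℤ) - 1) * wwE n 1 j)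
      (E := 0) _ (by omega) (by omega) (by omega) ?_]
    · simp only [wwE]
      split_ifs <;>
              (try simp only [false_or, or_false, true_or, or_true, not_true, not_false_iff] at *) <;>
              first | rfl | ring1 | omega | (push_cast; ring1) | exact (‹False›).elim
    · intro k hk
      simp only [zzE, wwE]
      split_ifs <;>
              (try simp only [false_or, or_false, true_or, or_true, not_true, not_false_iff] at *) <;>
              first | rfl | ring1 | omega | (push_cast; ring1) | exact (‹False›).elim
  · by_cases hi1 : i = 1
    · subst hi1
      by_cases hj0 : j = 0
      · rw [sum_eval (a := 0) (b := 1) (A := 0) (B := 0) (E := 0) _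
          (by omega) (by omega) (by omega) ?_]
        · split_ifs <;>
              (try simp only [false_or, or_false, true_or, or_true, not_true, not_false_iff] at *) <;>
              first | rfl | ring1 | omega | (push_cast; ring1) | exact (‹False›).elim
        · intro k hk
          simp only [zzE, wwE]
          split_ifs <;>
              (try simp only [false_or, or_false, true_or, or_true, not_true, not_false_iff] at *) <;>
              first | rfl | ring1 | omega | (push_cast; ring1) | exact (‹False›).elim
      · by_cases hj1 : j = 1
        · rw [sum_eval (a := 2) (b := 0) (A := 1) (B := 0) (E := 0) _
            (by omega) (by omega) (by omega) ?_]
          · split_ifs <;>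
              (try simp only [false_or, or_false, true_or, or_true, not_true, not_false_iff] at *) <;>
              first | rfl | ring1 | omega | (push_cast; ring1) | exact (‹False›).elim
          · intro k hk
            simp only [zzE, wwE]
            split_ifs <;>
              (try simp only [false_or, or_false, true_or, or_true, not_true, not_false_iff] at *) <;>
              first | rfl | ring1 | omega | (push_cast; ring1) | exact (‹False›).elim
        · by_cases hjn : j = n
          · rw [sum_eval3 (a := 0) (b := 1) (c := 2) (A := 0)
              (B := -(2 * (n : ℤ) ^ 2 - n - 1)) (C := 2 * (n : ℤ) ^ 2 - 2 * n + 1)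
              (E := 1) _ (by omega) (by omega) (by omega) (by omega) (by omega) (by omega) ?_]
            · split_ifs <;>
              (try simp only [false_or, or_false, true_or, or_true, not_true, not_false_iff] at *) <;>
              first | rfl | ring1 | omega | (push_cast; ring1) | exact (‹False›).elim
            · intro k hk
              simp only [zzE, wwE]
              split_ifs <;>
              (try simp only [false_or, or_false, true_or, or_true, not_true, not_false_iff] at *) <;>
              first | rfl | ring1 | omega | (push_cast; ring1) | exact (‹False›).elim
          · rw [sum_eval (a := 2) (b := j + 1) (A := -1) (B := 1) (E := 0) _
              (by omega) (by omega) (by omega) ?_]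
            · split_ifs <;>
              (try simp only [false_or, or_false, true_or, or_true, not_true, not_false_iff] at *) <;>
              first | rfl | ring1 | omega | (push_cast; ring1) | exact (‹False›).elim
            · intro k hk
              simp only [zzE, wwE]
              split_ifs <;>
              (try simp only [false_or, or_false, true_or, or_true, not_true, not_false_iff] at *) <;>
              first | rfl | ring1 | omega | (push_cast; ring1) | exact (‹False›).elim
    · by_cases hin : i = n
      · rw [sum_eval (a := 1) (b := 0) (A := wwE n 1 j) (B := 0) (E := 0) _
          (by omega) (by omega) (by omega) ?_]
        · simp only [wwE]
          split_ifs <;>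
              (try simp only [false_or, or_false, true_or, or_true, not_true, not_false_iff] at *) <;>
              first | rfl | ring1 | omega | (push_cast; ring1) | exact (‹False›).elim
        · intro k hk
          simp only [zzE, wwE]
          split_ifs <;>
              (try simp only [false_or, or_false, true_or, or_true, not_true, not_false_iff] at *) <;>
              first | rfl | ring1 | omega | (push_cast; ring1) | exact (‹False›).elim
      · rw [sum_eval (a := 1) (b := i + 1) (A := -(wwE n 1 j)) (B := wwE n (i + 1) j)
          (E := 0) _ (by omega) (by omega) (by omega) ?_]
        · simp only [wwE]
          split_ifs <;>
              (try simp only [false_or, or_false, true_or, or_true, not_true, not_false_iff] at *) <;>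
              first | rfl | ring1 | omega | (push_cast; ring1) | exact (‹False›).elim
        · intro k hk
          simp only [zzE, wwE]
          split_ifs <;>
              (try simp only [false_or, or_false, true_or, or_true, not_true, not_false_iff] at *) <;>
              first | rfl | ring1 | omega | (push_cast; ring1) | exact (‹False›).elim

end Star15

open Star15

/-- The Smith normal form over ℤ of the transmission-adjacency matrix of the star K_{1,n}
(n ≥ 2) is diag(1, 1, 2n−1, …, 2n−1, 2n(n−1)(2n−1)). -/
theorem stmt_15 {n : ℕ} (hn : 2 ≤ n) (G : SimpleGraph (Fin (n + 1)))
    [DecidableRel G.Adj]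
    (hstar : ∀ u v : Fin (n + 1), G.Adj u v ↔ u ≠ v ∧ (u = 0 ∨ v = 0)) :
    ∃ U W : Matrix (Fin (n + 1)) (Fin (n + 1)) ℤ, IsUnit U.det ∧ IsUnit W.det ∧
      U * (Matrix.diagonal (fun v => ((∑ u : Fin (n + 1), G.dist u v : ℕ) : ℤ))
            - G.adjMatrix ℤ) * W
        = Matrix.diagonal (fun i : Fin (n + 1) =>
            if (i : ℕ) ≤ 1 then (1 : ℤ)
            else if (i : ℕ) = n then 2 * (n : ℤ) * ((n : ℤ) - 1) * (2 * (n : ℤ) - 1)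
            else 2 * (n : ℤ) - 1) := by
  classical
  have hval0 : ∀ w : Fin (n + 1), w = 0 ↔ (w : ℕ) = 0 := by
    intro w
    constructor
    · intro h; subst h; rfl
    · intro h; exact Fin.ext (by simpa using h)
  -- distances in the star
  have hdist : ∀ u v : Fin (n + 1),
      (G.dist u v : ℤ) = if u = v then 0 else if u = 0 ∨ v = 0 then 1 else 2 := by
    intro u v
    by_cases huv : u = v
    · simp [huv, SimpleGraph.dist_self]
    · by_cases h0 : u = 0 ∨ v = 0
      · have hadj : G.Adj u v := (hstar u v).mpr ⟨huv, h0⟩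
        rw [if_neg huv, if_pos h0, SimpleGraph.dist_eq_one_iff_adj.mpr hadj]
        norm_num
      · push_neg at h0
        obtain ⟨hu0, hv0⟩ := h0
        have h1 : G.Adj u 0 := (hstar u 0).mpr ⟨hu0, Or.inr rfl⟩
        have h2 : G.Adj 0 v := (hstar 0 v).mpr ⟨fun h => hv0 h.symm, Or.inl rfl⟩
        have w : G.Walk u v := h1.toWalk.append h2.toWalk
        have hle : G.dist u v ≤ 2 := by
          have := SimpleGraph.dist_le (h1.toWalk.append h2.toWalk)
          simpa using this
        have hne1 : G.dist u v ≠ 1 := by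
          intro h
          have hadj := SimpleGraph.dist_eq_one_iff_adj.mp h
          rw [hstar] at hadj
          exact (not_or.mpr ⟨hu0, hv0⟩) hadj.2
        have hne0 : G.dist u v ≠ 0 := by
          intro h
          rcases SimpleGraph.dist_eq_zero_iff_eq_or_not_reachable.mp h with h' | h'
          · exact huv h'
          · exact h' ⟨w⟩
        have h2d : G.dist u v = 2 := by omega
        rw [if_neg huv, if_neg (not_or.mpr ⟨hu0, hv0⟩), h2d]
        norm_num
  -- transmissions
  have htr : ∀ v : Fin (n + 1),
      ((∑ u : Fin (n + 1), G.dist u v : ℕ) : ℤ)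
        = if (v : ℕ) = 0 then (n : ℤ) else 2 * (n : ℤ) - 1 := by
    intro v
    rw [Nat.cast_sum]
    by_cases hv : v = 0
    · subst hv
      rw [if_pos (by simp : ((0 : Fin (n + 1)) : ℕ) = 0)]
      have hcongr : ∀ u ∈ Finset.univ, (G.dist u (0 : Fin (n + 1)) : ℤ)
          = 1 + (if u = (0 : Fin (n + 1)) then -1 else 0) := by
        intro u _
        rw [hdist u 0]
        by_cases h : u = 0 <;> simp [h]
      rw [Finset.sum_congr rfl hcongr, Finset.sum_add_distrib, Finset.sum_const,
        Finset.card_univ, Fintype.card_fin,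
        Finset.sum_ite_eq' Finset.univ (0 : Fin (n + 1)) (fun _ => (-1 : ℤ)),
        if_pos (Finset.mem_univ _)]
      push_cast
      ring
    · rw [if_neg (fun h => hv ((hval0 v).mpr h))]
      have hcongr : ∀ u ∈ Finset.univ, (G.dist u v : ℤ)
          = 2 + ((if u = v then -2 else 0) + (if u = (0 : Fin (n + 1)) then -1 else 0)) := by
        intro u _
        rw [hdist u v]
        by_cases h1 : u = v
        · subst h1
          rw [if_pos rfl, if_pos rfl, if_neg hv]
          ring
        · rw [if_neg h1, if_neg h1]
          by_cases h2 : u = 0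
          · subst h2
            rw [if_pos (Or.inl rfl), if_pos rfl]
            ring
          · rw [if_neg (fun hc => hc.elim h2 hv), if_neg h2]
            ring
      rw [Finset.sum_congr rfl hcongr, Finset.sum_add_distrib, Finset.sum_add_distrib,
        Finset.sum_const, Finset.card_univ, Fintype.card_fin,
        Finset.sum_ite_eq' Finset.univ v (fun _ => (-2 : ℤ)),
        Finset.sum_ite_eq' Finset.univ (0 : Fin (n + 1)) (fun _ => (-1 : ℤ)),
        if_pos (Finset.mem_univ _), if_pos (Finset.mem_univ _)]
      push_cast
      ring
  -- the transmission-adjacency matrix in closed form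
  have hM : (Matrix.diagonal (fun v : Fin (n + 1) =>
        ((∑ u : Fin (n + 1), G.dist u v : ℕ) : ℤ)) - G.adjMatrix ℤ)
      = Matrix.of (fun k l : Fin (n + 1) => mmE n k l) := by
    ext k l
    rw [Matrix.sub_apply, Matrix.diagonal_apply, SimpleGraph.adjMatrix_apply, Matrix.of_apply]
    by_cases hkl : k = l
    · subst hkl
      rw [if_pos rfl, if_neg (G.irrefl), htr k]
      simp only [mmE]
      split_ifs <;> first | ring1 | omega
    · have hvkl : ¬(k : ℕ) = (l : ℕ) := fun h => hkl (Fin.val_inj.mp h)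
      rw [if_neg hkl]
      by_cases hadj : G.Adj k l
      · obtain ⟨-, h0⟩ := (hstar k l).mp hadj
        rw [if_pos hadj]
        simp only [mmE, if_neg hvkl]
        rw [if_pos (h0.imp (fun h => (hval0 k).mp h) (fun h => (hval0 l).mp h))]
        ring
      · rw [if_neg hadj]
        have h0 : ¬((k : ℕ) = 0 ∨ (l : ℕ) = 0) := by
          intro hc
          exact hadj ((hstar k l).mpr
            ⟨hkl, hc.imp (fun h => (hval0 k).mpr h) (fun h => (hval0 l).mpr h)⟩)
        simp only [mmE, if_neg hvkl]
        rw [if_neg h0]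
        ring
  -- the unimodular matrices
  set U : Matrix (Fin (n + 1)) (Fin (n + 1)) ℤ := Matrix.of fun i k : Fin (n + 1) => uuE n i k with hU
  set W : Matrix (Fin (n + 1)) (Fin (n + 1)) ℤ := Matrix.of fun l j : Fin (n + 1) => wwE n l j with hW
  set V : Matrix (Fin (n + 1)) (Fin (n + 1)) ℤ := Matrix.of fun k j : Fin (n + 1) => vvE n k j with hV
  set Z : Matrix (Fin (n + 1)) (Fin (n + 1)) ℤ := Matrix.of fun l j : Fin (n + 1) => zzE n l j with hZ
  have hUV : U * V = 1 := by
    ext i j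
    rw [Matrix.mul_apply, Matrix.one_apply, hU, hV]
    simp only [Matrix.of_apply]
    rw [Fin.sum_univ_eq_sum_range (fun k => uuE n (i : ℕ) k * vvE n k (j : ℕ)) (n + 1),
      L3 hn i.isLt j.isLt]
    by_cases h : i = j
    · rw [if_pos h, if_pos (by rw [h])]
    · rw [if_neg (fun hh => h (Fin.val_inj.mp hh)), if_neg h]
  have hZW : Z * W = 1 := by
    ext i j
    rw [Matrix.mul_apply, Matrix.one_apply, hZ, hW]
    simp only [Matrix.of_apply]
    rw [Fin.sum_univ_eq_sum_range (fun l => zzE n (i : ℕ) l * wwE n l (j : ℕ)) (n + 1),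
      Lz hn i.isLt j.isLt]
    by_cases h : i = j
    · rw [if_pos h, if_pos (by rw [h])]
    · rw [if_neg (fun hh => h (Fin.val_inj.mp hh)), if_neg h]
  refine ⟨U, W, Matrix.isUnit_det_of_right_inverse hUV,
    Matrix.isUnit_det_of_left_inverse hZW, ?_⟩
  rw [hM]
  have hUM : U * Matrix.of (fun k l : Fin (n + 1) => mmE n k l)
      = Matrix.diagonal (fun i : Fin (n + 1) => ddE n i) * Z := by
    ext i j
    rw [Matrix.mul_apply, Matrix.diagonal_mul, hU, hZ]
    simp only [Matrix.of_apply]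
    rw [Fin.sum_univ_eq_sum_range (fun k => uuE n (i : ℕ) k * mmE n k (j : ℕ)) (n + 1),
      L1 hn i.isLt j.isLt]
  rw [hUM, Matrix.mul_assoc, hZW, Matrix.mul_one]
  rfl
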